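/- Let β ∈ (0,1] and T a positive integer, and define f : {0,1}^m → ℝ by f(z) = (1 − β·|z|/m)^T, where |z| is the Hamming weight. Then every Fourier coefficient of f is non-negative: f^(S) ≥ 0 for all S ∈ {0,1}^m. -/

import Mathlib

open Finset

/-- The character `χ_S(z) = (-1)^(S·z)` on the Boolean cube (`F₂` inner product). -/
noncomputable def boolChar {m : ℕ} (S z : Fin m → ZMod 2) : ℝ :=
  (-1 : ℝ) ^ (∑ i, S i * z i).val

/-- The Fourier coefficient `f^(S) = 2^{-m} Σ_z f(z) (-1)^(S·z)`. -/
noncomputable def bFourierCoeff {m : ℕ} (f : (Fin m → ZMod 2) → ℝ) (S : Fin m → ZMod 2) : ℝ :=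
  (∑ z : Fin m → ZMod 2, f z * boolChar S z) / 2 ^ m

lemma neg_one_pow_natCast_val (N : ℕ) : (-1:ℝ) ^ ((N : ZMod 2)).val = (-1) ^ N := by
  rw [ZMod.val_natCast, ← neg_one_pow_eq_pow_mod_two]

lemma char_prod {m : ℕ} (v : Fin m → ZMod 2) :
    (-1:ℝ) ^ ((∑ i, v i).val) = ∏ i, (-1:ℝ) ^ ((v i).val) := by
  have h1 : (∑ i, v i) = ((∑ i, (v i).val : ℕ) : ZMod 2) := by
    push_cast [ZMod.natCast_val, ZMod.cast_id]
    rfl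
  rw [h1, neg_one_pow_natCast_val, ← Finset.prod_pow_eq_pow_sum]

lemma zmod2_cases (a : ZMod 2) : a = 0 ∨ a = 1 := by revert a; decide

/-- For `β ∈ (0,1]`, `T` a positive integer and `f(z) = (1 - β|z|/m)^T` (with `|z|` the
Hamming weight), every Fourier coefficient of `f` is non-negative. -/
theorem fourierCoeff_nonneg_of_hammingWeight_pow {m : ℕ} (hm : 0 < m) (β : ℝ)
    (hβ0 : 0 < β) (hβ1 : β ≤ 1) (T : ℕ) (hT : 0 < T)
    (f : (Fin m → ZMod 2) → ℝ)
    (hf : ∀ z, f z = (1 - β * (hammingNorm z : ℝ) / (m : ℝ)) ^ T)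
    (S : Fin m → ZMod 2) :
    0 ≤ bFourierCoeff f S := by
  have hm' : (0:ℝ) < m := by exact_mod_cast hm
  set h : ZMod 2 → ℝ := fun b => if b = 0 then 1/m else (1-β)/m with hh
  have h0 : h 0 = 1/m := by simp [hh]
  have h1 : h 1 = (1-β)/m := by simp [hh]
  have hnn : ∀ b, 0 ≤ h b := by
    intro b
    rcases zmod2_cases b with hb | hb
    · rw [hb, h0]; positivity
    · rw [hb, h1]; exact div_nonneg (by linarith) hm'.le
  have hle : h 1 ≤ h 0 := by
    rw [h0, h1]
    exact (div_le_div_iff_of_pos_right hm').mpr (by linarith)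
  -- f z as a sum over maps
  have hsum : ∀ z : Fin m → ZMod 2, ∑ i, h (z i) = 1 - β * (hammingNorm z : ℝ) / m := by
    intro z
    have : ∀ i, h (z i) = 1/m - (if z i ≠ 0 then β/m else 0) := by
      intro i
      rcases zmod2_cases (z i) with hb | hb <;> rw [hb]
      · simp [h0]
      · rw [h1]; simp; ring
    rw [Finset.sum_congr rfl fun i _ => this i, Finset.sum_sub_distrib,
      Finset.sum_const, Finset.sum_ite, Finset.sum_const, Finset.sum_const]
    simp only [card_univ, Fintype.card_fin, smul_eq_mul, mul_zero, add_zero, nsmul_eq_mul]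
    rw [hammingNorm]
    field_simp
  have hfz : ∀ z, f z = ∑ g : Fin T → Fin m, ∏ t, h (z (g t)) := by
    intro z
    rw [hf z, ← hsum z, Fintype.sum_pow]
  -- numerator nonneg
  have key : 0 ≤ ∑ z : Fin m → ZMod 2, f z * boolChar S z := by
    have rw1 : ∑ z : Fin m → ZMod 2, f z * boolChar S z
        = ∑ g : Fin T → Fin m, ∑ z : Fin m → ZMod 2,
            ∏ i, (h (z i) ^ (#{t | g t = i}) * (-1:ℝ) ^ ((S i * z i).val)) := by
      rw [Finset.sum_comm]
      refine Finset.sum_congr rfl fun z _ => ?_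
      rw [hfz z, Finset.sum_mul]
      refine Finset.sum_congr rfl fun g _ => ?_
      rw [Finset.prod_mul_distrib]
      congr 1
      · rw [← Finset.prod_fiberwise' univ g (fun i => h (z i))]
        exact Finset.prod_congr rfl fun i _ => Finset.prod_const _
      · rw [boolChar, char_prod]
    rw [rw1]
    refine Finset.sum_nonneg fun g _ => ?_
    rw [← Fintype.prod_sum (fun i b => h b ^ (#{t | g t = i}) * (-1:ℝ) ^ ((S i * b).val))]
    refine Finset.prod_nonneg fun i _ => ?_
    have huniv : (univ : Finset (ZMod 2)) = {0, 1} := by decide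
    rw [huniv, Finset.sum_insert (by decide), Finset.sum_singleton]
    rcases zmod2_cases (S i) with hS | hS <;> rw [hS]
    · simp only [zero_mul, ZMod.val_zero, pow_zero, mul_one]
      have := hnn 0; have := hnn 1; positivity
    · simp only [one_mul, mul_zero, ZMod.val_zero, pow_zero, mul_one, ZMod.val_one]
      have : (h 1) ^ (#{t | g t = i}) ≤ (h 0) ^ (#{t | g t = i}) :=
        pow_le_pow_left₀ (hnn 1) hle _
      simp only [pow_one, mul_neg_one]
      linarith
  rw [bFourierCoeff]
  positivity
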